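/- Let R be a commutative ring, let M and N be finitely generated projective R-modules, and let d ≥ 0. Then the natural R-linear map S^d(M^*) ⊗_R N → P^d(M, N), sending (λ_1 · λ_2 · ⋯ · λ_d) ⊗ n (for λ_i ∈ M^* = Hom_R(M,R) and n ∈ N) to the homogeneous degree-d polynomial law whose value at x ∈ M ⊗_R S is (∏_{i=1}^d (λ_i ⊗ id_S)(x)) • (n ⊗ 1), is an isomorphism of R-modules. -/

import Mathlib

open TensorProduct

universe u

variable (R : Type u) [CommRing R]

/-- The type of families of functions `S ⊗[R] M → S ⊗[R] N`, one for each commutative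
`R`-algebra `S` (no naturality required). -/
abbrev RawLaw (M N : Type u) [AddCommGroup M] [Module R M] [AddCommGroup N] [Module R N] :
    Type (u + 1) :=
  ∀ (S : Type u) [CommRing S] [Algebra R S], S ⊗[R] M → S ⊗[R] N

variable (M N : Type u) [AddCommGroup M] [Module R M] [AddCommGroup N] [Module R N]

/-- Naturality: such a family is a polynomial law (in the sense of Roby) if it commutes
with the maps induced by every `R`-algebra homomorphism. -/
def IsPolyLaw (f : RawLaw R M N) : Prop :=
  ∀ (S S' : Type u) [CommRing S] [Algebra R S] [CommRing S'] [Algebra R S']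
    (φ : S →ₐ[R] S') (x : S ⊗[R] M),
    LinearMap.rTensor N φ.toLinearMap (f S x) = f S' (LinearMap.rTensor M φ.toLinearMap x)

/-- Homogeneity of degree `d`. -/
def IsHomog (d : ℕ) (f : RawLaw R M N) : Prop :=
  ∀ (S : Type u) [CommRing S] [Algebra R S] (s : S) (x : S ⊗[R] M),
    f S (s • x) = s ^ d • f S x

/-- The `R`-module `P^d(M, N)` of polynomial laws from `M` to `N` homogeneous of
degree `d`, as a submodule of the module of raw families. -/
noncomputable def polyLawHomog (d : ℕ) : Submodule R (RawLaw R M N) where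
  carrier := {f | IsPolyLaw R M N f ∧ IsHomog R M N d f}
  add_mem' := by
    rintro f g ⟨hf1, hf2⟩ ⟨hg1, hg2⟩
    constructor
    · intro S S' _ _ _ _ φ x
      show LinearMap.rTensor N φ.toLinearMap (f S x + g S x)
          = f S' (LinearMap.rTensor M φ.toLinearMap x) + g S' (LinearMap.rTensor M φ.toLinearMap x)
      rw [map_add, hf1 S S' φ x, hg1 S S' φ x]
    · intro S _ _ s xx
      show f S (s • xx) + g S (s • xx) = s ^ d • (f S xx + g S xx)
      rw [hf2 S s xx, hg2 S s xx, smul_add]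
  zero_mem' := by
    constructor
    · intro S S' _ _ _ _ φ x
      show LinearMap.rTensor N φ.toLinearMap 0 = (0 : S' ⊗[R] N)
      rw [map_zero]
    · intro S _ _ s xx
      show (0 : S ⊗[R] N) = s ^ d • (0 : S ⊗[R] N)
      rw [smul_zero]
  smul_mem' := by
    rintro r f ⟨hf1, hf2⟩
    constructor
    · intro S S' _ _ _ _ φ x
      show LinearMap.rTensor N φ.toLinearMap (r • f S x)
          = r • f S' (LinearMap.rTensor M φ.toLinearMap x)
      rw [map_smul, hf1 S S' φ x]
    · intro S _ _ s xx
      show r • f S (s • xx) = s ^ d • (r • f S xx)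
      rw [hf2 S s xx, smul_comm]

open PiTensorProduct in
/-- The submodule of the `d`-th tensor power generated by the elements `x - σ x`,
for `σ` a permutation of the `d` factors. -/
noncomputable def symRel (P : Type u) [AddCommGroup P] [Module R P] (d : ℕ) :
    Submodule R (⨂[R] (_ : Fin d), P) :=
  Submodule.span R {x | ∃ (σ : Equiv.Perm (Fin d)) (y : ⨂[R] (_ : Fin d), P),
    x = y - (PiTensorProduct.reindex R (fun _ : Fin d => P) σ) y}

/-- The `d`-th symmetric power of a module: the quotient of the `d`-th tensor power by
the submodule generated by the elements `x - σ x`. -/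
abbrev SymPow (P : Type u) [AddCommGroup P] [Module R P] (d : ℕ) : Type u :=
  (⨂[R] (_ : Fin d), P) ⧸ symRel R P d

/-!
STATEMENT 5: Let R be a commutative ring, let M and N be finitely generated projective
R-modules, and let d ≥ 0.  Then the natural R-linear map S^d(M^*) ⊗_R N → P^d(M, N),
sending (λ_1 ⋯ λ_d) ⊗ n to the homogeneous degree-d polynomial law whose value at
x ∈ M ⊗_R S is (∏_i (λ_i ⊗ id_S)(x)) • (n ⊗ 1), is an isomorphism of R-modules.
(Formalized: there is an `R`-linear map with these values on pure tensors, it is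
injective, and its range is exactly `P^d(M, N)`.) -/

namespace Stmt5Aux

open PiTensorProduct

open List



variable {n d : ℕ}

/-- The count finsupp of a tuple. -/
noncomputable def cnt (a : Fin d → Fin n) : Fin n →₀ ℕ :=
  Multiset.toFinsupp (↑(List.ofFn a))

lemma cnt_toMultiset (a : Fin d → Fin n) :
    Finsupp.toMultiset (cnt a) = (↑(List.ofFn a) : Multiset (Fin n)) := by
  simp [cnt, Multiset.toFinsupp_toMultiset]

lemma cnt_sum (a : Fin d → Fin n) : (cnt a).sum (fun _ e => e) = d := by
  have h := Finsupp.card_toMultiset (cnt a)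
  rw [cnt_toMultiset] at h
  exact (by simpa using h.symm : (cnt a).sum (fun _ => id) = d)

lemma prod_toMultiset_map {β : Type*} [CommMonoid β] (k : Fin n →₀ ℕ) (g : Fin n → β) :
    (Multiset.map g (Finsupp.toMultiset k)).prod = k.prod fun j e => g j ^ e := by
  classical
  rw [Finsupp.toMultiset_map, Finsupp.prod_toMultiset]
  exact Finsupp.prod_mapDomain_index (fun b => pow_zero b) (fun b e e' => pow_add b e e')

lemma prod_comp_cnt {β : Type*} [CommMonoid β] (a : Fin d → Fin n) (g : Fin n → β) :
    (∏ i, g (a i)) = (cnt a).prod fun j e => g j ^ e := by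
  rw [← prod_toMultiset_map, cnt_toMultiset, Multiset.map_coe, Multiset.prod_coe,
    List.map_ofFn, List.prod_ofFn]
  rfl

lemma cnt_comp_perm (a : Fin d → Fin n) (σ : Equiv.Perm (Fin d)) : cnt (a ∘ σ) = cnt a := by
  have h : ((ofFn (a ∘ σ)) : Multiset (Fin n)) = (ofFn a : Multiset (Fin n)) := by
    rw [Multiset.coe_eq_coe, List.ofFn_eq_map, List.ofFn_eq_map, ← List.map_map]
    exact List.Perm.map a (Equiv.Perm.map_finRange_perm σ)
  rw [cnt, cnt, h]

lemma monotone_eq_of_cnt_eq {a b : Fin d → Fin n} (ha : Monotone a) (hb : Monotone b)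
    (h : cnt a = cnt b) : a = b := by
  have hm : ((ofFn a) : Multiset (Fin n)) = (ofFn b : Multiset (Fin n)) := by
    rw [← cnt_toMultiset, ← cnt_toMultiset, h]
  have hp : (ofFn a).Perm (ofFn b) := Multiset.coe_eq_coe.mp hm
  have he : ofFn a = ofFn b :=
    List.Perm.eq_of_sortedLE (List.sortedLE_ofFn_iff.mpr ha) (List.sortedLE_ofFn_iff.mpr hb) hp
  exact List.ofFn_injective he

/-- A canonical tuple with a given count finsupp. -/
noncomputable def rep (k : Fin n →₀ ℕ) (h : k.sum (fun _ e => e) = d) : Fin d → Fin n :=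
  fun i => (Finsupp.toMultiset k).toList.get
    (Fin.cast (by rw [Multiset.length_toList, Finsupp.card_toMultiset]; exact h.symm) i)

lemma ofFn_rep (k : Fin n →₀ ℕ) (h : k.sum (fun _ e => e) = d) :
    List.ofFn (rep k h) = (Finsupp.toMultiset k).toList := by
  apply List.ext_getElem
  · rw [List.length_ofFn, Multiset.length_toList, Finsupp.card_toMultiset]
    exact h.symm
  · intro i h1 h2
    simp [rep]

lemma cnt_rep (k : Fin n →₀ ℕ) (h : k.sum (fun _ e => e) = d) : cnt (rep k h) = k := by
  classical
  rw [cnt, ofFn_rep, Multiset.coe_toList, Finsupp.toMultiset_toFinsupp]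


section symPow

variable {R : Type u} [CommRing R] {P : Type u} [AddCommGroup P] [Module R P] {d : ℕ}

/-- quotient map notation -/
noncomputable abbrev mkS (y : ⨂[R] (_ : Fin d), P) : SymPow R P d :=
  Submodule.Quotient.mk y

lemma mkS_reindex (σ : Equiv.Perm (Fin d)) (y : ⨂[R] (_ : Fin d), P) :
    mkS ((PiTensorProduct.reindex R (fun _ : Fin d => P) σ) y) = mkS y := by
  rw [Submodule.Quotient.eq]
  have h : y - (PiTensorProduct.reindex R (fun _ : Fin d => P) σ) y ∈ symRel R P d := by
    unfold symRel
    exact Submodule.subset_span ⟨σ, y, rfl⟩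
  simpa using Submodule.neg_mem _ h

lemma mkS_tprod_comp_perm (g : Fin d → P) (σ : Equiv.Perm (Fin d)) :
    mkS (R := R) (PiTensorProduct.tprod R (g ∘ σ)) = mkS (PiTensorProduct.tprod R g) := by
  have h : PiTensorProduct.tprod R (g ∘ σ)
      = PiTensorProduct.reindex R (fun _ : Fin d => P) σ.symm (PiTensorProduct.tprod R g) := by
    rw [PiTensorProduct.reindex_tprod]
    rfl
  rw [h, mkS_reindex]

lemma mkS_tprod_cnt {n : ℕ} (h : Fin n → P) {a b : Fin d → Fin n} (hab : cnt a = cnt b) :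
    mkS (R := R) (PiTensorProduct.tprod R (h ∘ a)) = mkS (PiTensorProduct.tprod R (h ∘ b)) := by
  have hs : a ∘ (Tuple.sort a) = b ∘ (Tuple.sort b) :=
    monotone_eq_of_cnt_eq (Tuple.monotone_sort a) (Tuple.monotone_sort b)
      (by rw [cnt_comp_perm, cnt_comp_perm, hab])
  calc mkS (R := R) (PiTensorProduct.tprod R (h ∘ a))
      = mkS (PiTensorProduct.tprod R ((h ∘ a) ∘ Tuple.sort a)) :=
        (mkS_tprod_comp_perm (h ∘ a) (Tuple.sort a)).symm
    _ = mkS (PiTensorProduct.tprod R ((h ∘ b) ∘ Tuple.sort b)) := by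
        have : (h ∘ a) ∘ (Tuple.sort a) = (h ∘ b) ∘ (Tuple.sort b) := by
          rw [Function.comp_assoc, Function.comp_assoc, hs]
        rw [this]
    _ = mkS (PiTensorProduct.tprod R (h ∘ b)) := mkS_tprod_comp_perm (h ∘ b) (Tuple.sort b)

end symPow

section theta

variable {R : Type u} [CommRing R] {P : Type u} [AddCommGroup P] [Module R P] {d : ℕ}
variable {A : Type u} [CommRing A] [Algebra R A]

/-- Lift of a linear map `P →ₗ A` to the symmetric power, by multiplying out. -/
noncomputable def symProd (L : P →ₗ[R] A) : SymPow R P d →ₗ[R] A := by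
  refine Submodule.liftQ _ (PiTensorProduct.lift
    ((MultilinearMap.mkPiAlgebra R (Fin d) A).compLinearMap (fun _ => L))) ?_
  unfold symRel
  rw [Submodule.span_le]
  rintro x ⟨σ, y, rfl⟩
  have key : (PiTensorProduct.lift
        ((MultilinearMap.mkPiAlgebra R (Fin d) A).compLinearMap (fun _ => L))).comp
        (PiTensorProduct.reindex R (fun _ : Fin d => P) σ).toLinearMap
      = PiTensorProduct.lift
        ((MultilinearMap.mkPiAlgebra R (Fin d) A).compLinearMap (fun _ => L)) := by
    apply PiTensorProduct.ext
    apply MultilinearMap.ext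
    intro f
    simp only [LinearMap.compMultilinearMap_apply, LinearMap.comp_apply,
      LinearEquiv.coe_coe, PiTensorProduct.reindex_tprod, PiTensorProduct.lift.tprod,
      MultilinearMap.compLinearMap_apply, MultilinearMap.mkPiAlgebra_apply]
    exact (Equiv.prod_comp σ.symm fun i => L (f i)).symm ▸ rfl
  have hy := LinearMap.congr_fun key y
  simp only [LinearMap.comp_apply, LinearEquiv.coe_coe] at hy
  simp only [SetLike.mem_coe, LinearMap.mem_ker, map_sub, hy, sub_self]

@[simp] lemma symProd_mk_tprod (L : P →ₗ[R] A) (f : Fin d → P) :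
    symProd L (mkS (PiTensorProduct.tprod R f)) = ∏ i, L (f i) := by
  simp [symProd, mkS, Submodule.liftQ_apply]

end theta

section dualFamily

variable {R : Type u} [CommRing R] {M : Type u} [AddCommGroup M] [Module R M]
variable {n d : ℕ}

lemma cnt_eq_sum_single (a : Fin d → Fin n) : cnt a = ∑ i, Finsupp.single (a i) 1 := by
  classical
  ext j
  rw [cnt, Multiset.toFinsupp_apply, ← Fin.univ_val_map, Multiset.count_map]
  have h2 : Multiset.card (Multiset.filter (fun i => j = a i) Finset.univ.val)
      = (Finset.filter (fun i => j = a i) Finset.univ).card := rfl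
  rw [h2, Finset.card_filter]
  simp [Finsupp.single_apply, Finsupp.finset_sum_apply, eq_comm]

/-- The generic linear form associated to a generating family. -/
noncomputable def Lgen (m : Fin n → M) : Module.Dual R M →ₗ[R] MvPolynomial (Fin n) R where
  toFun lam := ∑ j, lam (m j) • MvPolynomial.X j
  map_add' f g := by simp [add_smul, Finset.sum_add_distrib]
  map_smul' c f := by simp [Finset.smul_sum, mul_smul]

/-- canonical symmetric tensor attached to a multidegree -/
noncomputable def vk (ε : Fin n → Module.Dual R M) (d : ℕ) (k : Fin n →₀ ℕ) :
    SymPow R (Module.Dual R M) d :=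
  if h : k.sum (fun _ e => e) = d then mkS (PiTensorProduct.tprod R (ε ∘ rep k h)) else 0

/-- The retraction from polynomials to the symmetric power. -/
noncomputable def beta (ε : Fin n → Module.Dual R M) (d : ℕ) :
    MvPolynomial (Fin n) R →ₗ[R] SymPow R (Module.Dual R M) d where
  toFun p := ∑ k ∈ Finset.finsuppAntidiag Finset.univ d, MvPolynomial.coeff k p • vk ε d k
  map_add' p q := by simp [MvPolynomial.coeff_add, add_smul, Finset.sum_add_distrib]
  map_smul' c p := by simp [MvPolynomial.coeff_smul, Finset.smul_sum, smul_smul]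

lemma beta_monomial (ε : Fin n → Module.Dual R M) (k : Fin n →₀ ℕ)
    (hk : k.sum (fun _ e => e) = d) :
    beta ε d (MvPolynomial.monomial k (1 : R)) = vk ε d k := by
  classical
  have hmem : k ∈ Finset.finsuppAntidiag Finset.univ d :=
    Finset.mem_finsuppAntidiag'.mpr ⟨hk, Finset.subset_univ _⟩
  show (∑ k' ∈ Finset.finsuppAntidiag Finset.univ d,
      MvPolynomial.coeff k' (MvPolynomial.monomial k (1 : R)) • vk ε d k') = vk ε d k
  simp only [MvPolynomial.coeff_monomial, ite_smul, one_smul, zero_smul]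
  rw [Finset.sum_ite_eq, if_pos hmem]

lemma prod_X_eq_monomial_cnt (a : Fin d → Fin n) :
    (∏ i, MvPolynomial.X (a i) : MvPolynomial (Fin n) R) = MvPolynomial.monomial (cnt a) 1 := by
  rw [cnt_eq_sum_single, MvPolynomial.monomial_sum_one]
  refine Finset.prod_congr rfl fun i _ => ?_
  rw [← MvPolynomial.X_pow_eq_monomial, pow_one]

lemma beta_symProd_tprod (m : Fin n → M) (ε : Fin n → Module.Dual R M)
    (hdual : ∀ lam : Module.Dual R M, ∑ j, lam (m j) • ε j = lam)
    (lam : Fin d → Module.Dual R M) :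
    beta ε d ((symProd (Lgen m) : SymPow R (Module.Dual R M) d →ₗ[R] MvPolynomial (Fin n) R)
        (mkS (PiTensorProduct.tprod R lam)))
      = mkS (PiTensorProduct.tprod R lam) := by
  classical
  rw [symProd_mk_tprod]
  have hexp : (∏ i, Lgen m (lam i))
      = ∑ a ∈ Fintype.piFinset (fun _ : Fin d => (Finset.univ : Finset (Fin n))),
        (∏ i, lam i (m (a i))) • (MvPolynomial.monomial (cnt a) (1 : R)) := by
    show (∏ i, ∑ j, lam i (m j) • MvPolynomial.X j) = _
    rw [Finset.prod_univ_sum]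
    refine Finset.sum_congr rfl fun a _ => ?_
    rw [← prod_X_eq_monomial_cnt]
    simp only [MvPolynomial.smul_eq_C_mul, Finset.prod_mul_distrib, map_prod]
  rw [hexp, map_sum]
  simp only [map_smul]
  have hbm : ∀ a : Fin d → Fin n, beta ε d (MvPolynomial.monomial (cnt a) (1 : R))
      = mkS (PiTensorProduct.tprod R (ε ∘ a)) := by
    intro a
    rw [beta_monomial ε (cnt a) (cnt_sum a)]
    rw [vk, dif_pos (cnt_sum a)]
    exact mkS_tprod_cnt ε (cnt_rep (cnt a) (cnt_sum a))
  simp only [hbm]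
  -- now reverse the multilinear expansion
  have h1 : PiTensorProduct.tprod R lam
      = ∑ a ∈ Fintype.piFinset (fun _ : Fin d => (Finset.univ : Finset (Fin n))),
        (∏ i, lam i (m (a i))) • PiTensorProduct.tprod R (ε ∘ a) := by
    conv_lhs => rw [show lam = (fun i => ∑ j, lam i (m j) • ε j) from
      funext fun i => (hdual (lam i)).symm]
    rw [(PiTensorProduct.tprod R).map_sum_finset]
    exact Finset.sum_congr rfl fun a _ => MultilinearMap.map_smul_univ _ _ _
  have h2 : mkS (R := R) (PiTensorProduct.tprod R lam)
      = (symRel R (Module.Dual R M) d).mkQ (PiTensorProduct.tprod R lam) := rfl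
  rw [h2, h1, map_sum]
  refine Finset.sum_congr rfl fun a _ => ?_
  rw [map_smul]
  rfl

end dualFamily

section Phi

variable {R : Type u} [CommRing R] {M N : Type u} [AddCommGroup M] [Module R M]
  [AddCommGroup N] [Module R N] {d : ℕ}

/-- Evaluation of dual vectors against `x : S ⊗ M`, as a linear map. -/
noncomputable def evx (S : Type u) [CommRing S] [Algebra R S] (x : S ⊗[R] M) :
    Module.Dual R M →ₗ[R] S where
  toFun lam := TensorProduct.rid R S (LinearMap.lTensor S lam x)
  map_add' f g := by
    show TensorProduct.rid R S (LinearMap.lTensor S (f + g) x) = _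
    rw [LinearMap.lTensor_add]
    simp
  map_smul' c f := by
    show TensorProduct.rid R S (LinearMap.lTensor S (c • f) x) = _
    rw [LinearMap.lTensor_smul]
    simp

/-- Product of evaluations, as a multilinear map. -/
noncomputable def prodEv (S : Type u) [CommRing S] [Algebra R S] (x : S ⊗[R] M) (d : ℕ) :
    MultilinearMap R (fun _ : Fin d => Module.Dual R M) S :=
  (MultilinearMap.mkPiAlgebra R (Fin d) S).compLinearMap (fun _ => evx S x)

lemma prodEv_apply (S : Type u) [CommRing S] [Algebra R S] (x : S ⊗[R] M) (d : ℕ)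
    (lam : Fin d → Module.Dual R M) :
    prodEv S x d lam = ∏ i, TensorProduct.rid R S (LinearMap.lTensor S (lam i) x) := by
  simp [prodEv, evx]

/-- The basic multilinear family of raw laws. -/
noncomputable def Psi0 (M N : Type u) [AddCommGroup M] [Module R M] [AddCommGroup N]
    [Module R N] (d : ℕ) :
    MultilinearMap R (fun _ : Fin d => Module.Dual R M) (N →ₗ[R] RawLaw R M N) where
  toFun lam :=
    { toFun := fun nn => fun S _ _ x => prodEv S x d lam • ((1 : S) ⊗ₜ[R] nn)
      map_add' := fun a b => by
        funext S instS instA x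
        show prodEv S x d lam • ((1 : S) ⊗ₜ[R] (a + b))
            = prodEv S x d lam • ((1 : S) ⊗ₜ[R] a) + prodEv S x d lam • ((1 : S) ⊗ₜ[R] b)
        rw [TensorProduct.tmul_add, smul_add]
      map_smul' := fun c a => by
        funext S instS instA x
        show prodEv S x d lam • ((1 : S) ⊗ₜ[R] (c • a))
            = c • (prodEv S x d lam • ((1 : S) ⊗ₜ[R] a))
        rw [TensorProduct.tmul_smul, smul_comm] }
  map_update_add' := by
    intro dec lam i f g
    refine LinearMap.ext fun nn => ?_
    funext S instS instA x
    show prodEv S x d (Function.update lam i (f + g)) • ((1 : S) ⊗ₜ[R] nn) = _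
    rw [(prodEv S x d).map_update_add, add_smul]
    rfl
  map_update_smul' := by
    intro dec lam i c f
    refine LinearMap.ext fun nn => ?_
    funext S instS instA x
    show prodEv S x d (Function.update lam i (c • f)) • ((1 : S) ⊗ₜ[R] nn) = _
    rw [(prodEv S x d).map_update_smul, smul_assoc]
    rfl

/-- The additive group structure on raw laws (no longer found automatically). -/
noncomputable instance rawLawAddCommGroup (M N : Type u) [AddCommGroup M] [Module R M]
    [AddCommGroup N] [Module R N] : AddCommGroup (RawLaw R M N) :=
  @Pi.addCommGroup _ _ (fun _ => @Pi.addCommGroup _ _ (fun _ => @Pi.addCommGroup _ _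
    (fun _ => Pi.addCommGroup)))

/-- The main map. -/
noncomputable def Phi (M N : Type u) [AddCommGroup M] [Module R M] [AddCommGroup N]
    [Module R N] (d : ℕ) :
    (SymPow R (Module.Dual R M) d) ⊗[R] N →ₗ[R] RawLaw R M N :=
  TensorProduct.lift (Submodule.liftQ _ (PiTensorProduct.lift (Psi0 M N d)) (by
  unfold symRel
  rw [Submodule.span_le]
  rintro x ⟨σ, y, rfl⟩
  have key : (PiTensorProduct.lift (Psi0 M N d)).comp
      (PiTensorProduct.reindex R (fun _ : Fin d => Module.Dual R M) σ).toLinearMap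
      = PiTensorProduct.lift (Psi0 M N d) := by
    apply PiTensorProduct.ext
    apply MultilinearMap.ext
    intro f
    simp only [LinearMap.compMultilinearMap_apply, LinearMap.comp_apply,
      LinearEquiv.coe_coe, PiTensorProduct.reindex_tprod, PiTensorProduct.lift.tprod]
    refine LinearMap.ext fun nn => ?_
    funext S instS instA x
    show prodEv S x d (f ∘ σ.symm) • ((1 : S) ⊗ₜ[R] nn) = prodEv S x d f • ((1 : S) ⊗ₜ[R] nn)
    rw [prodEv_apply, prodEv_apply]
    rw [show (∏ i, TensorProduct.rid R S (LinearMap.lTensor S ((f ∘ σ.symm) i) x))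
      = ∏ i, TensorProduct.rid R S (LinearMap.lTensor S (f i) x) from
      Equiv.prod_comp σ.symm fun i => TensorProduct.rid R S (LinearMap.lTensor S (f i) x)]
  have hy := LinearMap.congr_fun key y
  simp only [LinearMap.comp_apply, LinearEquiv.coe_coe] at hy
  simp only [SetLike.mem_coe, LinearMap.mem_ker, map_sub, hy, sub_self]))

lemma Phi_mk_tprod (lam : Fin d → Module.Dual R M) (nn : N)
    (S : Type u) [CommRing S] [Algebra R S] (x : S ⊗[R] M) :
    Phi M N d ((Submodule.Quotient.mk (PiTensorProduct.tprod R lam)) ⊗ₜ[R] nn) S x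
      = (∏ i, TensorProduct.rid R S (LinearMap.lTensor S (lam i) x)) • ((1 : S) ⊗ₜ[R] nn) := by
  rw [← prodEv_apply]
  simp only [Phi, TensorProduct.lift.tmul, Submodule.liftQ_apply, PiTensorProduct.lift.tprod]
  rfl

end Phi

section mem

variable {R : Type u} [CommRing R] {M N : Type u} [AddCommGroup M] [Module R M]
  [AddCommGroup N] [Module R N] {d : ℕ}

lemma evx_natural (S S' : Type u) [CommRing S] [Algebra R S] [CommRing S'] [Algebra R S']
    (φ : S →ₐ[R] S') (lam : Module.Dual R M) (x : S ⊗[R] M) :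
    φ (TensorProduct.rid R S (LinearMap.lTensor S lam x))
      = TensorProduct.rid R S' (LinearMap.lTensor S' lam
          (LinearMap.rTensor M φ.toLinearMap x)) := by
  induction x using TensorProduct.induction_on with
  | zero => simp
  | tmul s m => simp [TensorProduct.smul_tmul', map_smul]
  | add a b ha hb => simp only [map_add, ha, hb]

lemma evx_smul (S : Type u) [CommRing S] [Algebra R S] (lam : Module.Dual R M) (s : S)
    (x : S ⊗[R] M) :
    TensorProduct.rid R S (LinearMap.lTensor S lam (s • x))
      = s * TensorProduct.rid R S (LinearMap.lTensor S lam x) := by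
  induction x using TensorProduct.induction_on with
  | zero => simp
  | tmul t m =>
    rw [TensorProduct.smul_tmul']
    simp [smul_eq_mul, mul_comm, mul_left_comm]
  | add a b ha hb =>
    rw [smul_add, map_add, map_add, ha, hb]
    rw [map_add, map_add, mul_add]

lemma Phi_basic_mem (lam : Fin d → Module.Dual R M) (nn : N) :
    Phi M N d ((Submodule.Quotient.mk (PiTensorProduct.tprod R lam)) ⊗ₜ[R] nn)
      ∈ polyLawHomog R M N d := by
  constructor
  · -- natural
    intro S S' _ _ _ _ φ x
    rw [Phi_mk_tprod, Phi_mk_tprod]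
    have h1 : ∀ (s : S) , LinearMap.rTensor N φ.toLinearMap (s • ((1 : S) ⊗ₜ[R] nn))
        = φ s • ((1 : S') ⊗ₜ[R] nn) := by
      intro s
      rw [TensorProduct.smul_tmul', TensorProduct.smul_tmul']
      simp [LinearMap.rTensor_tmul]
    rw [h1, map_prod]
    congr 1
    exact Finset.prod_congr rfl fun i _ => evx_natural S S' φ (lam i) x
  · -- homogeneous
    intro S _ _ s x
    rw [Phi_mk_tprod, Phi_mk_tprod]
    have h1 : (∏ i, TensorProduct.rid R S (LinearMap.lTensor S (lam i) (s • x)))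
        = s ^ d * ∏ i, TensorProduct.rid R S (LinearMap.lTensor S (lam i) x) := by
      calc (∏ i, TensorProduct.rid R S (LinearMap.lTensor S (lam i) (s • x)))
          = ∏ i, s * TensorProduct.rid R S (LinearMap.lTensor S (lam i) x) :=
            Finset.prod_congr rfl fun i _ => evx_smul S (lam i) s x
        _ = (∏ _i : Fin d, s) * ∏ i, TensorProduct.rid R S (LinearMap.lTensor S (lam i) x) :=
            Finset.prod_mul_distrib
        _ = s ^ d * ∏ i, TensorProduct.rid R S (LinearMap.lTensor S (lam i) x) := by
            rw [Finset.prod_const, Finset.card_univ, Fintype.card_fin]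
    rw [h1, mul_smul]

lemma Phi_mem (ξ : (SymPow R (Module.Dual R M) d) ⊗[R] N) :
    Phi M N d ξ ∈ polyLawHomog R M N d := by
  induction ξ using TensorProduct.induction_on with
  | zero => rw [map_zero]; exact Submodule.zero_mem _
  | add x y hx hy => rw [map_add]; exact Submodule.add_mem _ hx hy
  | tmul w nn =>
    obtain ⟨y, rfl⟩ := Submodule.Quotient.mk_surjective _ w
    induction y using PiTensorProduct.induction_on with
    | smul_tprod r f =>
      have h1 : (Submodule.Quotient.mk (r • PiTensorProduct.tprod R f) :
          SymPow R (Module.Dual R M) d) ⊗ₜ[R] nn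
          = r • ((Submodule.Quotient.mk (PiTensorProduct.tprod R f) :
            SymPow R (Module.Dual R M) d) ⊗ₜ[R] nn) := by
        rw [Submodule.Quotient.mk_smul, TensorProduct.smul_tmul']
      rw [h1, map_smul]
      exact Submodule.smul_mem _ r (Phi_basic_mem f nn)
    | add a b ha hb =>
      have h1 : (Submodule.Quotient.mk (a + b) : SymPow R (Module.Dual R M) d) ⊗ₜ[R] nn
          = (Submodule.Quotient.mk a : SymPow R (Module.Dual R M) d) ⊗ₜ[R] nn
            + (Submodule.Quotient.mk b : SymPow R (Module.Dual R M) d) ⊗ₜ[R] nn := by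
        rw [Submodule.Quotient.mk_add, TensorProduct.add_tmul]
      rw [h1, map_add]
      exact Submodule.add_mem _ ha hb

end mem

section generic

variable {R : Type u} [CommRing R] {M N : Type u} [AddCommGroup M] [Module R M]
  [AddCommGroup N] [Module R N] {n d : ℕ}

/-- Evaluation of a raw law at a point, as a linear map. -/
noncomputable def rawEval (S' : Type u) [CommRing S'] [Algebra R S'] (x : S' ⊗[R] M) :
    RawLaw R M N →ₗ[R] S' ⊗[R] N where
  toFun F := F S' x
  map_add' F G := rfl
  map_smul' r F := rfl

/-- The generic element. -/
noncomputable def uGen (R : Type u) [CommRing R] {M : Type u} [AddCommGroup M] [Module R M]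
    (m : Fin n → M) : (MvPolynomial (Fin n) R) ⊗[R] M :=
  ∑ j, (MvPolynomial.X j : MvPolynomial (Fin n) R) ⊗ₜ[R] m j

lemma evx_uGen (m : Fin n → M) (lam : Module.Dual R M) :
    TensorProduct.rid R _ (LinearMap.lTensor _ lam (uGen R m)) = Lgen m lam := by
  show _ = ∑ j, lam (m j) • MvPolynomial.X j
  rw [uGen, map_sum, map_sum]
  exact Finset.sum_congr rfl fun j _ => by simp

lemma reconstruct (m : Fin n → M) (ε : Fin n → Module.Dual R M)
    (hdual : ∀ x : M, ∑ j, ε j x • m j = x)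
    (S' : Type u) [CommRing S'] [Algebra R S'] (x : S' ⊗[R] M) :
    ∑ j, (TensorProduct.rid R S' (LinearMap.lTensor S' (ε j) x)) ⊗ₜ[R] m j = x := by
  induction x using TensorProduct.induction_on with
  | zero => simp
  | tmul s mm =>
    have h : ∀ j : Fin n,
        (TensorProduct.rid R S' (LinearMap.lTensor S' (ε j) (s ⊗ₜ[R] mm))) ⊗ₜ[R] m j
        = s ⊗ₜ[R] (ε j mm • m j) := by
      intro j
      rw [LinearMap.lTensor_tmul, TensorProduct.rid_tmul, TensorProduct.smul_tmul]
    rw [Finset.sum_congr rfl fun j _ => h j, ← TensorProduct.tmul_sum, hdual]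
  | add a b ha hb =>
    simp only [map_add, TensorProduct.add_tmul, Finset.sum_add_distrib, ha, hb]

lemma dual_identity (m : Fin n → M) (ε : Fin n → Module.Dual R M)
    (hdual : ∀ x : M, ∑ j, ε j x • m j = x) (lam : Module.Dual R M) :
    ∑ j, lam (m j) • ε j = lam := by
  refine LinearMap.ext fun x => ?_
  have h := congrArg lam (hdual x)
  rw [map_sum] at h
  simpa [LinearMap.sum_apply, smul_eq_mul, mul_comm] using h

lemma Phi_apply_uGen (m : Fin n → M) (ξ : (SymPow R (Module.Dual R M) d) ⊗[R] N) :
    Phi M N d ξ (MvPolynomial (Fin n) R) (uGen R m)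
      = LinearMap.rTensor N
        (symProd (Lgen m) : SymPow R (Module.Dual R M) d →ₗ[R] MvPolynomial (Fin n) R) ξ := by
  have key : ∀ ξ, rawEval (N := N) (MvPolynomial (Fin n) R) (uGen R m) (Phi M N d ξ)
      = LinearMap.rTensor N
        (symProd (Lgen m) : SymPow R (Module.Dual R M) d →ₗ[R] MvPolynomial (Fin n) R) ξ := by
    intro ξ
    induction ξ using TensorProduct.induction_on with
    | zero => rw [map_zero, map_zero, map_zero]
    | add x y hx hy => rw [map_add, map_add, map_add, hx, hy]
    | tmul w nn =>
      obtain ⟨y, rfl⟩ := Submodule.Quotient.mk_surjective _ w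
      induction y using PiTensorProduct.induction_on with
      | smul_tprod r f =>
        have h1 : (Submodule.Quotient.mk (r • PiTensorProduct.tprod R f) :
            SymPow R (Module.Dual R M) d) ⊗ₜ[R] nn
            = r • ((Submodule.Quotient.mk (PiTensorProduct.tprod R f) :
              SymPow R (Module.Dual R M) d) ⊗ₜ[R] nn) := by
          rw [Submodule.Quotient.mk_smul, TensorProduct.smul_tmul']
        rw [h1, map_smul, map_smul, map_smul]
        congr 1
        -- base case
        show Phi M N d ((Submodule.Quotient.mk (PiTensorProduct.tprod R f) :
            SymPow R (Module.Dual R M) d) ⊗ₜ[R] nn) (MvPolynomial (Fin n) R) (uGen R m) = _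
        rw [Phi_mk_tprod, LinearMap.rTensor_tmul, symProd_mk_tprod]
        rw [Finset.prod_congr rfl fun i _ => evx_uGen m (f i)]
        rw [TensorProduct.smul_tmul', smul_eq_mul, mul_one]
      | add a b ha hb =>
        have h1 : (Submodule.Quotient.mk (a + b) : SymPow R (Module.Dual R M) d) ⊗ₜ[R] nn
            = (Submodule.Quotient.mk a : SymPow R (Module.Dual R M) d) ⊗ₜ[R] nn
              + (Submodule.Quotient.mk b : SymPow R (Module.Dual R M) d) ⊗ₜ[R] nn := by
          rw [Submodule.Quotient.mk_add, TensorProduct.add_tmul]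
        rw [h1, map_add, map_add, map_add, ha, hb]
  exact key ξ

lemma beta_comp (m : Fin n → M) (ε : Fin n → Module.Dual R M)
    (hdual : ∀ x : M, ∑ j, ε j x • m j = x) :
    (beta ε d).comp (symProd (Lgen m) : SymPow R (Module.Dual R M) d →ₗ[R] _)
      = LinearMap.id := by
  apply Submodule.linearMap_qext
  apply PiTensorProduct.ext
  apply MultilinearMap.ext
  intro f
  simp only [LinearMap.compMultilinearMap_apply, LinearMap.comp_apply, Submodule.mkQ_apply,
    LinearMap.id_apply]
  exact beta_symProd_tprod m ε (dual_identity m ε hdual) f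

lemma Phi_injective (m : Fin n → M) (ε : Fin n → Module.Dual R M)
    (hdual : ∀ x : M, ∑ j, ε j x • m j = x) :
    Function.Injective (Phi (R := R) M N d) := by
  have hinv : ∀ ζ : (SymPow R (Module.Dual R M) d) ⊗[R] N,
      LinearMap.rTensor N (beta ε d) (LinearMap.rTensor N
        (symProd (Lgen m) : SymPow R (Module.Dual R M) d →ₗ[R] MvPolynomial (Fin n) R) ζ)
      = ζ := by
    intro ζ
    rw [← LinearMap.comp_apply, ← LinearMap.rTensor_comp, beta_comp m ε hdual,
      LinearMap.rTensor_id, LinearMap.id_apply]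
  intro ξ ξ' h
  have h2 := congrArg (fun F : RawLaw R M N => F (MvPolynomial (Fin n) R) (uGen R m)) h
  simp only [Phi_apply_uGen m] at h2
  rw [← hinv ξ, ← hinv ξ', h2]

end generic

section surj

variable {R : Type u} [CommRing R] {M N : Type u} [AddCommGroup M] [Module R M]
  [AddCommGroup N] [Module R N] {n d : ℕ}

lemma optionD_inj {s₁ s₂ : ℕ} {k₁ k₂ : Fin n →₀ ℕ}
    (h : Finsupp.single (none : Option (Fin n)) s₁ + k₁.mapDomain some
       = Finsupp.single none s₂ + k₂.mapDomain some) : k₁ = k₂ ∧ s₁ = s₂ := by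
  classical
  have hk : k₁ = k₂ := by
    ext j
    have := congrArg (fun g => g (some j)) h
    simpa [Finsupp.single_apply, Finsupp.mapDomain_apply (Option.some_injective _)] using this
  refine ⟨hk, ?_⟩
  have := congrArg (fun g => g none) h
  have h0 : ∀ k : Fin n →₀ ℕ, (k.mapDomain some) none = 0 := fun k =>
    Finsupp.mapDomain_notin_range _ _ (by simp)
  simpa [Finsupp.single_apply, h0] using this

lemma prod_X_some (k : Fin n →₀ ℕ) :
    (k.prod fun j e => (MvPolynomial.X (some j) : MvPolynomial (Option (Fin n)) R) ^ e)
      = MvPolynomial.monomial (k.mapDomain some) 1 := by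
  classical
  rw [← MvPolynomial.prod_X_pow_eq_monomial,
    Finsupp.mapDomain_support_of_injective (Option.some_injective _)]
  rw [Finset.prod_image (fun a _ b _ h => Option.some_injective _ h)]
  refine Finset.prod_congr rfl fun j _ => ?_
  rw [Finsupp.mapDomain_apply (Option.some_injective _)]

lemma psi1_monomial (k : Fin n →₀ ℕ) :
    MvPolynomial.aeval (fun j => (MvPolynomial.X none * MvPolynomial.X (some j) :
        MvPolynomial (Option (Fin n)) R)) (MvPolynomial.monomial k (1 : R))
      = MvPolynomial.monomial
          (Finsupp.single (none : Option (Fin n)) (k.sum fun _ x => x) + k.mapDomain some) 1 := by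
  classical
  rw [MvPolynomial.aeval_monomial, _root_.map_one, one_mul]
  have h1 : (k.prod fun j e => (MvPolynomial.X none * MvPolynomial.X (some j) :
      MvPolynomial (Option (Fin n)) R) ^ e)
      = (k.prod fun j e => (MvPolynomial.X (none : Option (Fin n)) :
          MvPolynomial (Option (Fin n)) R) ^ e)
        * (k.prod fun j e => (MvPolynomial.X (some j) :
          MvPolynomial (Option (Fin n)) R) ^ e) := by
    rw [Finsupp.prod, Finsupp.prod, Finsupp.prod, ← Finset.prod_mul_distrib]
    exact Finset.prod_congr rfl fun j _ => mul_pow _ _ _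
  rw [h1, prod_X_some]
  have h2 : (k.prod fun j e => (MvPolynomial.X (none : Option (Fin n)) :
      MvPolynomial (Option (Fin n)) R) ^ e)
      = MvPolynomial.monomial (Finsupp.single (none : Option (Fin n)) (k.sum fun _ x => x)) 1 := by
    rw [Finsupp.prod, Finset.prod_pow_eq_pow_sum, MvPolynomial.X_pow_eq_monomial]
    rfl
  rw [h2, MvPolynomial.monomial_mul, one_mul]

lemma psi0_monomial (k : Fin n →₀ ℕ) :
    (MvPolynomial.rename (some : Fin n → Option (Fin n))) (MvPolynomial.monomial k (1 : R))
      = MvPolynomial.monomial (k.mapDomain some) 1 :=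
  MvPolynomial.rename_monomial _ _ _

/-- Replacement for the removed `MvPolynomial.scalarRTensor`. -/
noncomputable def scalarRT {R : Type u} [CommRing R] {N : Type u} [AddCommGroup N] [Module R N]
    {σ : Type} [DecidableEq σ] : MvPolynomial σ R ⊗[R] N ≃ₗ[R] (σ →₀ ℕ) →₀ N :=
  (LinearEquiv.rTensor N
    (AddMonoidAlgebra.coeffLinearEquiv R : MvPolynomial σ R ≃ₗ[R] (σ →₀ ℕ) →₀ R)) ≪≫ₗ
    TensorProduct.finsuppScalarLeft R N (σ →₀ ℕ)

lemma scalarRT_apply_monomial_tmul {R : Type u} [CommRing R] {N : Type u} [AddCommGroup N]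
    [Module R N] {σ : Type} [DecidableEq σ] (e : σ →₀ ℕ) (r : R) (nn : N) (k : σ →₀ ℕ) :
    scalarRT (MvPolynomial.monomial e r ⊗ₜ[R] nn) k = if e = k then r • nn else 0 := by
  classical
  rw [scalarRT, LinearEquiv.trans_apply, LinearEquiv.rTensor_tmul,
    TensorProduct.finsuppScalarLeft_apply_tmul_apply]
  change (MvPolynomial.coeff k (MvPolynomial.monomial e r)) • nn = _
  rw [MvPolynomial.coeff_monomial, ite_smul, zero_smul]

lemma Phi_surjective (m : Fin n → M) (ε : Fin n → Module.Dual R M)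
    (hdual : ∀ x : M, ∑ j, ε j x • m j = x)
    (f : RawLaw R M N) (hf : f ∈ polyLawHomog R M N d) :
    ∃ ξ : (SymPow R (Module.Dual R M) d) ⊗[R] N, Phi M N d ξ = f := by
  classical
  obtain ⟨hnat, hhom⟩ := hf
  set c : (MvPolynomial (Fin n) R) ⊗[R] N := f (MvPolynomial (Fin n) R) (uGen R m) with hc
  set e : ((Fin n →₀ ℕ) →₀ N) := scalarRT c with he
  -- c as a sum of monomials
  have crep : c = ∑ k ∈ e.support, (MvPolynomial.monomial k (1 : R)) ⊗ₜ[R] e k := by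
    apply (scalarRT (R := R) (σ := Fin n) (N := N)).injective
    rw [map_sum]
    ext l
    rw [Finsupp.finset_sum_apply]
    simp only [scalarRT_apply_monomial_tmul, ite_smul, one_smul]
    rw [Finset.sum_ite_eq', ← he]
    split
    · rfl
    · next hl => exact Finsupp.notMem_support_iff.mp hl
  have hsupp : ∀ k ∈ e.support, (k.sum fun _ x => x) = d := by
    intro k0 hk0
    by_contra hne
    set A := MvPolynomial (Option (Fin n)) R with hA
    set t : A := MvPolynomial.X none with ht
    set ψ0 : MvPolynomial (Fin n) R →ₐ[R] A :=
      (MvPolynomial.rename (some : Fin n → Option (Fin n))) with hψ0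
    set ψ1 : MvPolynomial (Fin n) R →ₐ[R] A :=
      MvPolynomial.aeval (fun j => MvPolynomial.X none * MvPolynomial.X (some j)) with hψ1
    have hu1 : LinearMap.rTensor M ψ1.toLinearMap (uGen R m)
        = t • LinearMap.rTensor M ψ0.toLinearMap (uGen R m) := by
      rw [uGen, map_sum, map_sum, Finset.smul_sum]
      refine Finset.sum_congr rfl fun j _ => ?_
      rw [LinearMap.rTensor_tmul, LinearMap.rTensor_tmul, TensorProduct.smul_tmul']
      congr 1
      show ψ1 (MvPolynomial.X j) = t • ψ0 (MvPolynomial.X j)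
      rw [hψ1, hψ0, MvPolynomial.aeval_X, MvPolynomial.rename_X, smul_eq_mul, ht]
    have hkey : LinearMap.rTensor N ψ1.toLinearMap c
        = t ^ d • LinearMap.rTensor N ψ0.toLinearMap c := by
      rw [hc, hnat _ _ ψ1 (uGen R m), hnat _ _ ψ0 (uGen R m), hu1, hhom _ t]
    rw [crep, map_sum, map_sum, Finset.smul_sum] at hkey
    have hL : ∀ k : Fin n →₀ ℕ,
        LinearMap.rTensor N ψ1.toLinearMap ((MvPolynomial.monomial k (1:R)) ⊗ₜ[R] e k)
        = (MvPolynomial.monomial (Finsupp.single (none : Option (Fin n)) (k.sum fun _ x => x)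
            + k.mapDomain some) 1) ⊗ₜ[R] e k := by
      intro k
      rw [LinearMap.rTensor_tmul]
      congr 1
      exact psi1_monomial k
    have hR : ∀ k : Fin n →₀ ℕ,
        t ^ d • LinearMap.rTensor N ψ0.toLinearMap ((MvPolynomial.monomial k (1:R)) ⊗ₜ[R] e k)
        = (MvPolynomial.monomial (Finsupp.single (none : Option (Fin n)) d
            + k.mapDomain some) 1) ⊗ₜ[R] e k := by
      intro k
      rw [LinearMap.rTensor_tmul, TensorProduct.smul_tmul']
      congr 1
      show t ^ d * ψ0 (MvPolynomial.monomial k 1) = _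
      rw [hψ0, MvPolynomial.rename_monomial, ht, MvPolynomial.X_pow_eq_monomial,
        MvPolynomial.monomial_mul, one_mul]
    rw [Finset.sum_congr rfl fun k _ => hL k, Finset.sum_congr rfl fun k _ => hR k] at hkey
    have happ := congrArg (fun z : ((Option (Fin n) →₀ ℕ) →₀ N) =>
        z (Finsupp.single (none : Option (Fin n)) (k0.sum fun _ x => x) + k0.mapDomain some))
      (congrArg (scalarRT (R := R) (N := N)) hkey)
    simp only [map_sum, Finsupp.finset_sum_apply,
      scalarRT_apply_monomial_tmul, one_smul] at happ
    rw [Finset.sum_eq_single_of_mem k0 hk0 (fun b _ hb => by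
        rw [if_neg]
        intro hEq
        exact hb (optionD_inj hEq).1), if_pos rfl] at happ
    rw [Finset.sum_eq_zero (fun k _ => by
        rw [if_neg]
        intro hEq
        exact hne ((optionD_inj hEq).2 ▸ rfl)), ] at happ
    exact Finsupp.mem_support_iff.mp hk0 happ
  -- construct the preimage
  refine ⟨∑ k ∈ e.support.attach, (vk ε d k.1) ⊗ₜ[R] e k.1, ?_⟩
  funext S' iS iA x
  have hux : LinearMap.rTensor M (MvPolynomial.aeval
      (fun j => TensorProduct.rid R S' (LinearMap.lTensor S' (ε j) x)) :
        MvPolynomial (Fin n) R →ₐ[R] S').toLinearMap (uGen R m) = x := by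
    rw [uGen, map_sum]
    have h1 : ∀ j : Fin n, LinearMap.rTensor M (MvPolynomial.aeval
        (fun j => TensorProduct.rid R S' (LinearMap.lTensor S' (ε j) x)) :
          MvPolynomial (Fin n) R →ₐ[R] S').toLinearMap
          ((MvPolynomial.X j : MvPolynomial (Fin n) R) ⊗ₜ[R] m j)
        = (TensorProduct.rid R S' (LinearMap.lTensor S' (ε j) x)) ⊗ₜ[R] m j := by
      intro j
      rw [LinearMap.rTensor_tmul]
      congr 1
      exact MvPolynomial.aeval_X _ j
    rw [Finset.sum_congr rfl fun j _ => h1 j]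
    exact reconstruct m ε hdual S' x
  have hfx : f S' x = LinearMap.rTensor N (MvPolynomial.aeval
      (fun j => TensorProduct.rid R S' (LinearMap.lTensor S' (ε j) x)) :
        MvPolynomial (Fin n) R →ₐ[R] S').toLinearMap c := by
    rw [hc, hnat _ _ _ (uGen R m), hux]
  rw [crep, map_sum] at hfx
  have hterm : ∀ k : Fin n →₀ ℕ,
      LinearMap.rTensor N (MvPolynomial.aeval
        (fun j => TensorProduct.rid R S' (LinearMap.lTensor S' (ε j) x)) :
          MvPolynomial (Fin n) R →ₐ[R] S').toLinearMap
        ((MvPolynomial.monomial k (1:R)) ⊗ₜ[R] e k)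
      = (k.prod fun j ee => (TensorProduct.rid R S' (LinearMap.lTensor S' (ε j) x)) ^ ee)
          ⊗ₜ[R] e k := by
    intro k
    rw [LinearMap.rTensor_tmul]
    congr 1
    simp only [AlgHom.toLinearMap_apply]
    rw [MvPolynomial.aeval_monomial, _root_.map_one, one_mul]
  rw [Finset.sum_congr rfl fun k _ => hterm k] at hfx
  have hPhi : Phi M N d (∑ k ∈ e.support.attach, (vk ε d k.1) ⊗ₜ[R] e k.1) S' x
      = ∑ k ∈ e.support.attach,
        (k.1.prod fun j ee => (TensorProduct.rid R S' (LinearMap.lTensor S' (ε j) x)) ^ ee)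
          ⊗ₜ[R] e k.1 := by
    have h0 : Phi M N d (∑ k ∈ e.support.attach, (vk ε d k.1) ⊗ₜ[R] e k.1) S' x
        = rawEval (N := N) S' x (Phi M N d (∑ k ∈ e.support.attach, (vk ε d k.1) ⊗ₜ[R] e k.1)) :=
      rfl
    rw [h0, map_sum, map_sum]
    refine Finset.sum_congr rfl fun k _ => ?_
    have hkd := hsupp k.1 k.2
    show Phi M N d ((vk ε d k.1) ⊗ₜ[R] e k.1) S' x = _
    rw [vk, dif_pos hkd, Phi_mk_tprod]
    have hprod : (∏ i, TensorProduct.rid R S'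
          (LinearMap.lTensor S' ((ε ∘ rep k.1 hkd) i) x))
        = k.1.prod fun j ee =>
            (TensorProduct.rid R S' (LinearMap.lTensor S' (ε j) x)) ^ ee := by
      have h2 := prod_comp_cnt (rep k.1 hkd)
        (fun j => TensorProduct.rid R S' (LinearMap.lTensor S' (ε j) x))
      rw [cnt_rep] at h2
      exact h2
    rw [hprod, TensorProduct.smul_tmul', smul_eq_mul, mul_one]
  rw [hPhi, hfx]
  exact Finset.sum_attach e.support (fun k =>
    (k.prod fun j ee => (TensorProduct.rid R S' (LinearMap.lTensor S' (ε j) x)) ^ ee) ⊗ₜ[R] e k)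

end surj



end Stmt5Aux

theorem stmt_5 [Module.Finite R M] [Module.Projective R M]
    [Module.Finite R N] [Module.Projective R N] (d : ℕ) :
    ∃ Φ : (SymPow R (Module.Dual R M) d) ⊗[R] N →ₗ[R] RawLaw R M N,
      (∀ (lam : Fin d → Module.Dual R M) (nn : N)
        (S : Type u) [CommRing S] [Algebra R S] (x : S ⊗[R] M),
        Φ ((Submodule.Quotient.mk (PiTensorProduct.tprod R lam)) ⊗ₜ[R] nn) S x
          = (∏ i, TensorProduct.rid R S (LinearMap.lTensor S (lam i) x)) • ((1 : S) ⊗ₜ[R] nn)) ∧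
      Function.Injective Φ ∧
      Set.range Φ = ↑(polyLawHomog R M N d) := by
  classical
  obtain ⟨nv, g, hg⟩ := Module.Finite.exists_fin' R M
  obtain ⟨sec, hsec⟩ := Module.projective_lifting_property g LinearMap.id hg
  set m : Fin nv → M := fun j => g (fun j' => if j = j' then (1 : R) else 0) with hm
  set ε : Fin nv → Module.Dual R M := fun j => (LinearMap.proj j).comp sec with hε
  have hdual : ∀ x : M, ∑ j, ε j x • m j = x := by
    intro x
    have h1 : ∑ j, ε j x • m j
        = g (∑ j, sec x j • fun j' => if j = j' then (1 : R) else 0) := by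
      rw [map_sum]
      refine Finset.sum_congr rfl fun j _ => ?_
      rw [map_smul]
      rfl
    rw [h1, ← pi_eq_sum_univ (sec x)]
    exact LinearMap.congr_fun hsec x
  refine ⟨Stmt5Aux.Phi M N d, ?_, Stmt5Aux.Phi_injective m ε hdual, ?_⟩
  · intro lam nn S _ _ x
    exact Stmt5Aux.Phi_mk_tprod lam nn S x
  · ext F
    constructor
    · rintro ⟨ξ, rfl⟩
      exact Stmt5Aux.Phi_mem ξ
    · intro hF
      obtain ⟨ξ, hξ⟩ := Stmt5Aux.Phi_surjective m ε hdual F hF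
      exact ⟨ξ, hξ⟩
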